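/- If Φ and Ψ are two orthonormal bases of ℝ^N with coherence μ, and a nonzero vector x has A nonzero coefficients in Φ and B nonzero coefficients in Ψ, then (A + B)/2 ≥ 1/μ. -/

import Mathlib

open scoped BigOperators

/-- Additive form of the discrete uncertainty principle: `(A + B)/2 ≥ 1/μ`. -/
theorem stmt1 {N : ℕ} (hN : 0 < N)
    (φ ψ : OrthonormalBasis (Fin N) ℂ (EuclideanSpace ℂ (Fin N)))
    (μ : ℝ)
    (hμ : μ = ⨆ ℓ : Fin N, ⨆ r : Fin N, ‖(inner ℂ (φ ℓ) (ψ r) : ℂ)‖)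
    (x : EuclideanSpace ℂ (Fin N)) (hx : x ≠ 0)
    (A B : ℕ)
    (hA : A = (Finset.univ.filter fun ℓ : Fin N => φ.repr x ℓ ≠ 0).card)
    (hB : B = (Finset.univ.filter fun ℓ : Fin N => ψ.repr x ℓ ≠ 0).card) :
    ((A : ℝ) + B) / 2 ≥ 1 / μ := by
  classical
  set a : Fin N → ℂ := fun ℓ => φ.repr x ℓ with ha
  set b : Fin N → ℂ := fun r => ψ.repr x r with hb
  set S : Finset (Fin N) := Finset.univ.filter fun ℓ : Fin N => a ℓ ≠ 0 with hS
  set T : Finset (Fin N) := Finset.univ.filter fun r : Fin N => b r ≠ 0 with hT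
  -- μ bounds every inner product
  have hμ0 : ∀ ℓ r : Fin N, ‖(inner ℂ (φ ℓ) (ψ r) : ℂ)‖ ≤ μ := by
    intro ℓ r
    rw [hμ]
    calc ‖(inner ℂ (φ ℓ) (ψ r) : ℂ)‖
        ≤ ⨆ r : Fin N, ‖(inner ℂ (φ ℓ) (ψ r) : ℂ)‖ :=
          le_ciSup (f := fun r : Fin N => ‖(inner ℂ (φ ℓ) (ψ r) : ℂ)‖)
            (Set.Finite.bddAbove (Set.finite_range _)) r
      _ ≤ ⨆ ℓ : Fin N, ⨆ r : Fin N, ‖(inner ℂ (φ ℓ) (ψ r) : ℂ)‖ :=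
          le_ciSup (f := fun ℓ : Fin N => ⨆ r : Fin N, ‖(inner ℂ (φ ℓ) (ψ r) : ℂ)‖)
            (Set.Finite.bddAbove (Set.finite_range _)) ℓ
  have hμnn : 0 ≤ μ := le_trans (norm_nonneg _) (hμ0 ⟨0, hN⟩ ⟨0, hN⟩)
  have hxpos : 0 < ‖x‖ := norm_pos_iff.mpr hx
  -- Parseval
  have hna : ∑ ℓ, ‖a ℓ‖ ^ 2 = ‖x‖ ^ 2 := by
    have h1 : ‖φ.repr x‖ = ‖x‖ := φ.repr.norm_map x
    rw [← h1, EuclideanSpace.norm_eq, Real.sq_sqrt (by positivity)]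
  have hnb : ∑ r, ‖b r‖ ^ 2 = ‖x‖ ^ 2 := by
    have h1 : ‖ψ.repr x‖ = ‖x‖ := ψ.repr.norm_map x
    rw [← h1, EuclideanSpace.norm_eq, Real.sq_sqrt (by positivity)]
  -- sum of ‖a‖ over support is ≤ √A * ‖x‖
  have hCS : ∑ ℓ ∈ S, ‖a ℓ‖ ≤ Real.sqrt A * ‖x‖ := by
    have h1 : (∑ ℓ ∈ S, ‖a ℓ‖) ^ 2 ≤ (A : ℝ) * ‖x‖ ^ 2 := by
      have h2 := Finset.sum_mul_sq_le_sq_mul_sq S (fun _ => (1 : ℝ)) (fun ℓ => ‖a ℓ‖)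
      simp only [one_mul, one_pow, Finset.sum_const, nsmul_eq_mul, mul_one] at h2
      have h3 : ∑ ℓ ∈ S, ‖a ℓ‖ ^ 2 ≤ ‖x‖ ^ 2 := by
        rw [← hna]
        exact Finset.sum_le_sum_of_subset_of_nonneg (Finset.subset_univ S)
          (fun i _ _ => by positivity)
      have h4 : (S.card : ℝ) = (A : ℝ) := by rw [hA]
      calc (∑ ℓ ∈ S, ‖a ℓ‖) ^ 2 ≤ (S.card : ℝ) * ∑ ℓ ∈ S, ‖a ℓ‖ ^ 2 := h2
        _ ≤ (A : ℝ) * ‖x‖ ^ 2 := by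
            rw [h4]; exact mul_le_mul_of_nonneg_left h3 (by positivity)
    have h5 : (0 : ℝ) ≤ ∑ ℓ ∈ S, ‖a ℓ‖ := Finset.sum_nonneg fun i _ => norm_nonneg _
    have h6 := Real.sqrt_le_sqrt h1
    rwa [Real.sqrt_sq h5, Real.sqrt_mul (by positivity), Real.sqrt_sq (norm_nonneg x)] at h6
  -- every coefficient in ψ is bounded
  have key : ∀ r : Fin N, ‖b r‖ ≤ μ * (Real.sqrt A * ‖x‖) := by
    intro r
    have hbr : b r = ∑ ℓ ∈ S, a ℓ * (inner ℂ (ψ r) (φ ℓ) : ℂ) := by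
      have h1 : b r = (inner ℂ (ψ r) x : ℂ) := ψ.repr_apply_apply x r
      have h2 : (inner ℂ (ψ r) x : ℂ) = ∑ ℓ, a ℓ * (inner ℂ (ψ r) (φ ℓ) : ℂ) := by
        conv_lhs => rw [← φ.sum_repr x]
        rw [inner_sum]
        exact Finset.sum_congr rfl fun ℓ _ => by rw [inner_smul_right]
      rw [h1, h2]
      exact (Finset.sum_subset (Finset.subset_univ S) fun ℓ _ hℓ => by
        have : a ℓ = 0 := by
          by_contra hc
          exact hℓ (by simp [hS, hc])
        simp [this]).symm
    calc ‖b r‖ = ‖∑ ℓ ∈ S, a ℓ * (inner ℂ (ψ r) (φ ℓ) : ℂ)‖ := by rw [hbr]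
      _ ≤ ∑ ℓ ∈ S, ‖a ℓ * (inner ℂ (ψ r) (φ ℓ) : ℂ)‖ := norm_sum_le _ _
      _ ≤ ∑ ℓ ∈ S, ‖a ℓ‖ * μ := by
          refine Finset.sum_le_sum fun ℓ _ => ?_
          rw [norm_mul]
          refine mul_le_mul_of_nonneg_left ?_ (norm_nonneg _)
          rw [norm_inner_symm]
          exact hμ0 ℓ r
      _ = (∑ ℓ ∈ S, ‖a ℓ‖) * μ := by rw [← Finset.sum_mul]
      _ ≤ (Real.sqrt A * ‖x‖) * μ := mul_le_mul_of_nonneg_right hCS hμnn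
      _ = μ * (Real.sqrt A * ‖x‖) := by ring
  -- main inequality
  have hmain : ‖x‖ ^ 2 ≤ (A : ℝ) * B * μ ^ 2 * ‖x‖ ^ 2 := by
    have h1 : ∑ r, ‖b r‖ ^ 2 = ∑ r ∈ T, ‖b r‖ ^ 2 := by
      refine (Finset.sum_subset (Finset.subset_univ T) fun r _ hr => ?_).symm
      have : b r = 0 := by
        by_contra hc
        exact hr (by simp [hT, hc])
      simp [this]
    have h2 : ∑ r ∈ T, ‖b r‖ ^ 2 ≤ T.card • ((μ * (Real.sqrt A * ‖x‖)) ^ 2) := by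
      refine Finset.sum_le_card_nsmul T _ _ fun r _ => ?_
      exact pow_le_pow_left₀ (norm_nonneg _) (key r) 2
    have h3 : (T.card : ℝ) = (B : ℝ) := by rw [hB]
    have h4 : (T.card : ℝ) * ((μ * (Real.sqrt A * ‖x‖)) ^ 2) =
        (B : ℝ) * (μ ^ 2 * ((A : ℝ) * ‖x‖ ^ 2)) := by
      rw [h3, mul_pow, mul_pow, Real.sq_sqrt (Nat.cast_nonneg A)]
    calc ‖x‖ ^ 2 = ∑ r ∈ T, ‖b r‖ ^ 2 := by rw [← h1, hnb]
      _ ≤ (T.card : ℝ) * ((μ * (Real.sqrt A * ‖x‖)) ^ 2) := by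
          simpa [nsmul_eq_mul] using h2
      _ = (A : ℝ) * B * μ ^ 2 * ‖x‖ ^ 2 := by
          rw [h4]; ring
  have hone : 1 ≤ (A : ℝ) * B * μ ^ 2 := by
    have hx2 : (0 : ℝ) < ‖x‖ ^ 2 := by positivity
    nlinarith [hmain]
  have hμpos : 0 < μ := by
    rcases hμnn.lt_or_eq with h | h
    · exact h
    · exfalso; rw [← h] at hone; simp at hone; linarith
  -- 1/μ ≤ √(A*B)
  have hsq : 1 ≤ Real.sqrt ((A : ℝ) * B) * μ := by
    have h1 : Real.sqrt 1 ≤ Real.sqrt ((A : ℝ) * B * μ ^ 2) := Real.sqrt_le_sqrt hone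
    rwa [Real.sqrt_one, Real.sqrt_mul (by positivity), Real.sqrt_sq hμnn] at h1
  have hdiv : 1 / μ ≤ Real.sqrt ((A : ℝ) * B) := by
    rw [div_le_iff₀ hμpos]
    exact hsq
  have hAMGM : Real.sqrt ((A : ℝ) * B) ≤ ((A : ℝ) + B) / 2 := by
    rw [Real.sqrt_mul (Nat.cast_nonneg A)]
    nlinarith [sq_nonneg (Real.sqrt A - Real.sqrt B), Real.sq_sqrt (Nat.cast_nonneg A : (0:ℝ) ≤ A),
      Real.sq_sqrt (Nat.cast_nonneg B : (0:ℝ) ≤ B), Real.sqrt_nonneg (A : ℝ), Real.sqrt_nonneg (B : ℝ)]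
  linarith
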